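/- Let U be a unitary complex matrix of size (p+q)×(p+q) written in block form U = [[A, B], [C, D]], where A is a p×p block, D is a q×q block, and B, C are the corresponding off-diagonal blocks (p and q need not be equal). Then |det A| = |det D|. -/

import Mathlib

open Matrix

theorem stmt15 (p q : ℕ)
    (A : Matrix (Fin p) (Fin p) ℂ) (B : Matrix (Fin p) (Fin q) ℂ)
    (C : Matrix (Fin q) (Fin p) ℂ) (D : Matrix (Fin q) (Fin q) ℂ)
    (hU : Matrix.fromBlocks A B C D * (Matrix.fromBlocks A B C D).conjTranspose = 1) :
    ‖A.det‖ = ‖D.det‖ := by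
  have habs : ‖(fromBlocks A B C D).det‖ = 1 := by
    have h2 := congrArg Matrix.det hU
    rw [det_mul, det_conjTranspose, det_one, Complex.star_def, Complex.mul_conj] at h2
    have h3 : Complex.normSq (fromBlocks A B C D).det = 1 := by exact_mod_cast h2
    rw [← Complex.sq_norm] at h3
    nlinarith [norm_nonneg (fromBlocks A B C D).det]
  rw [fromBlocks_conjTranspose, fromBlocks_multiply, ← fromBlocks_one] at hU
  have h1 : A * Aᴴ + B * Bᴴ = 1 := congrArg (fun M => M.toBlocks₁₁) hU
  have h3 : C * Aᴴ + D * Bᴴ = 0 := congrArg (fun M => M.toBlocks₂₁) hU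
  have key : fromBlocks A B C D * fromBlocks Aᴴ 0 Bᴴ 1 = fromBlocks 1 B 0 D := by
    rw [fromBlocks_multiply]
    congr 1 <;> simp [h1, h3]
  have hdet := congrArg Matrix.det key
  rw [det_mul, det_fromBlocks_zero₁₂, det_fromBlocks_zero₂₁, det_conjTranspose] at hdet
  simp only [det_one, one_mul, mul_one] at hdet
  calc ‖A.det‖
      = ‖(fromBlocks A B C D).det‖ * ‖star A.det‖ := by
        rw [habs, Complex.star_def, Complex.norm_conj, one_mul]
    _ = ‖D.det‖ := by rw [← norm_mul, hdet]
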